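/- arXiv:1805.04744 — 4 statements merged into one kernel-verified Lean document; each statement's English description precedes it below -/
import Mathlib

section
/- Let β > 1. For every n ≥ 1, the number of admissible words of length n satisfies β^n ≤ #Σ_β^n ≤ β^{n+1}/(β-1), where Σ_β^n is the set of words (ε_1,…,ε_n) that occur as the first n digits of the β-expansion of some x ∈ [0,1). -/
open Filter MeasureTheory Set

noncomputable def betaT (β : ℝ) (x : ℝ) : ℝ := β * x - ⌊β * x⌋

noncomputable def eps (β x : ℝ) (n : ℕ) : ℤ := ⌊β * (betaT β)^[n - 1] x⌋

noncomputable def runLen (β x : ℝ) (n : ℕ) : ℕ :=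
  sSup {j | ∃ i, i + j ≤ n ∧ ∀ k < j, eps β x (i + k + 1) = 0}

def isAdmissible (β : ℝ) (n : ℕ) (ω : ℕ → ℤ) : Prop :=
  ∃ x ∈ Set.Ico (0 : ℝ) 1, ∀ k < n, eps β x (k + 1) = ω k

def cylinder (β : ℝ) (n : ℕ) (ω : ℕ → ℤ) : Set ℝ :=
  {x | x ∈ Set.Ico (0 : ℝ) 1 ∧ ∀ k < n, eps β x (k + 1) = ω k}

def isFull (β : ℝ) (n : ℕ) (ω : ℕ → ℤ) : Prop :=
  MeasureTheory.volume (cylinder β n ω) = ENNReal.ofReal (β ^ (-(n : ℤ)))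

open Classical in
noncomputable def epsStar (β : ℝ) : ℕ → ℤ :=
  if h : ∃ m, 1 ≤ m ∧ eps β 1 m ≠ 0 ∧ ∀ k, m < k → eps β 1 k = 0 then
    fun n =>
      if (n - 1) % Nat.find h + 1 = Nat.find h then eps β 1 (Nat.find h) - 1
      else eps β 1 ((n - 1) % Nat.find h + 1)
  else eps β 1

def lexLt (u v : ℕ → ℤ) : Prop := ∃ j, (∀ k < j, u k = v k) ∧ u j < v j

def lexLe (u v : ℕ → ℤ) : Prop := lexLt u v ∨ u = v

noncomputable def vbeta (β x : ℝ) : ℝ :=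
  sSup {v | 0 ≤ v ∧ ∃ᶠ n : ℕ in atTop, (betaT β)^[n] x ≤ β ^ (-((n : ℝ) * v))}

noncomputable def hatv (β x : ℝ) : ℝ :=
  sSup {v | 0 ≤ v ∧ ∀ᶠ N : ℕ in atTop, ∃ n, 1 ≤ n ∧ n ≤ N ∧ (betaT β)^[n] x ≤ β ^ (-(v * (N : ℝ)))}


namespace Renyi

noncomputable def P (β : ℝ) (ω : ℕ → ℤ) (m : ℕ) : ℝ :=
  ∑ i ∈ Finset.range m, (ω i : ℝ) / β ^ (i + 1)

lemma eps_eq (β x : ℝ) (k : ℕ) : eps β x (k + 1) = ⌊β * (betaT β)^[k] x⌋ := by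
  simp [eps]

lemma iter_mem {β : ℝ} (x : ℝ) (hx : x ∈ Set.Ico (0:ℝ) 1) (n : ℕ) :
    (betaT β)^[n] x ∈ Set.Ico (0:ℝ) 1 := by
  induction n with
  | zero => exact hx
  | succ n ih =>
    rw [Function.iterate_succ_apply']
    have : betaT β ((betaT β)^[n] x) = Int.fract (β * (betaT β)^[n] x) := rfl
    rw [this]
    exact ⟨Int.fract_nonneg _, Int.fract_lt_one _⟩

lemma iter_eq {β : ℝ} (hβ : 0 < β) (x : ℝ) (ω : ℕ → ℤ) (n : ℕ)
    (h : ∀ k < n, eps β x (k + 1) = ω k) :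
    (betaT β)^[n] x = β ^ n * (x - P β ω n) := by
  induction n with
  | zero => simp [P]
  | succ n ih =>
    have hd : ∀ k < n, eps β x (k+1) = ω k := fun k hk => h k (by omega)
    rw [Function.iterate_succ_apply', ih hd]
    have hfl : ⌊β * (β ^ n * (x - P β ω n))⌋ = ω n := by
      rw [← ih hd, ← eps_eq]; exact h n (by omega)
    rw [betaT, hfl]
    have hP : P β ω (n+1) = P β ω n + (ω n : ℝ) / β ^ (n+1) :=
      Finset.sum_range_succ _ _
    have hb : (β:ℝ) ^ (n+1) ≠ 0 := by positivity
    rw [hP]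
    field_simp
    ring

lemma key_alg {β : ℝ} (hβ : 0 < β) (x : ℝ) (ω : ℕ → ℤ) (n : ℕ)
    (h : ∀ k < n, eps β x (k + 1) = ω k) :
    β * (betaT β)^[n] x - (ω n : ℝ) = β ^ (n+1) * (x - P β ω (n+1)) := by
  rw [iter_eq hβ x ω n h]
  have hP : P β ω (n+1) = P β ω n + (ω n : ℝ) / β ^ (n+1) :=
    Finset.sum_range_succ _ _
  have hb : (β:ℝ) ^ (n+1) ≠ 0 := by positivity
  rw [hP]; field_simp; ring

set_option maxHeartbeats 1000000 in
lemma mem_cylinder_iff {β : ℝ} (hβ : 0 < β) (ω : ℕ → ℤ) (n : ℕ) (x : ℝ) :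
    x ∈ cylinder β n ω ↔ ∀ k ≤ n, β ^ k * (x - P β ω k) ∈ Set.Ico (0:ℝ) 1 := by
  induction n with
  | zero =>
    constructor
    · rintro ⟨hx, -⟩ k hk
      interval_cases k
      simpa [P] using hx
    · intro h
      refine ⟨by simpa [P] using h 0 le_rfl, by omega⟩
  | succ n ih =>
    constructor
    · rintro ⟨hx, hd⟩ k hk
      have hcn : x ∈ cylinder β n ω := ⟨hx, fun k hk => hd k (by omega)⟩
      rcases Nat.lt_succ_iff_lt_or_eq.mp (Nat.lt_succ_of_le hk) with hk' | rfl
      · exact ih.mp hcn k (by omega)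
      · have := key_alg hβ x ω n (fun k hk => hd k (by omega))
        rw [← this]
        have hfl : ⌊β * (betaT β)^[n] x⌋ = ω n := by
          rw [← eps_eq]; exact hd n (by omega)
        constructor
        · have := Int.floor_le (β * (betaT β)^[n] x)
          rw [hfl] at this; linarith
        · have := Int.lt_floor_add_one (β * (betaT β)^[n] x)
          rw [hfl] at this; push_cast at this; linarith
    · intro h
      have hcn : x ∈ cylinder β n ω := ih.mpr (fun k hk => h k (by omega))
      obtain ⟨hx, hd⟩ := hcn
      refine ⟨hx, fun k hk => ?_⟩
      rcases Nat.lt_succ_iff_lt_or_eq.mp hk with hk' | rfl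
      · exact hd k hk'
      · rw [eps_eq]
        have halg := key_alg hβ x ω k (fun j hj => hd j hj)
        have hm := h (k+1) le_rfl
        rw [← halg] at hm
        have h1 : (ω k : ℝ) ≤ β * (betaT β)^[k] x := by
          have := hm.1; linarith
        have h2 : β * (betaT β)^[k] x < (ω k : ℝ) + 1 := by
          have := hm.2; linarith
        exact Int.floor_eq_iff.mpr ⟨h1, h2⟩

noncomputable def bnd (β : ℝ) (ω : ℕ → ℤ) (n : ℕ) : ℝ :=
  (Finset.range (n+1)).inf' (Finset.nonempty_range_iff.mpr (Nat.succ_ne_zero n))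
    (fun k => P β ω k + (β ^ k)⁻¹)

lemma P_mono {β : ℝ} (hβ : 0 < β) {ω : ℕ → ℤ} {n : ℕ} (hω : ∀ i < n, 0 ≤ ω i)
    {k : ℕ} (hk : k ≤ n) : P β ω k ≤ P β ω n := by
  unfold P
  apply Finset.sum_le_sum_of_subset_of_nonneg
  · exact Finset.range_subset_range.mpr hk
  · intro i hi _
    have h0 : (0:ℤ) ≤ ω i := hω i (Finset.mem_range.mp hi)
    have : (0:ℝ) ≤ (ω i : ℝ) := by exact_mod_cast h0
    positivity

lemma cylinder_eq {β : ℝ} (hβ : 1 < β) (ω : ℕ → ℤ) (n : ℕ)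
    (hω : ∀ i < n, 0 ≤ ω i) :
    cylinder β n ω = Set.Ico (P β ω n) (bnd β ω n) := by
  have hβ0 : (0:ℝ) < β := lt_trans one_pos hβ
  ext x
  rw [mem_cylinder_iff hβ0]
  constructor
  · intro h
    constructor
    · have := (h n le_rfl).1
      nlinarith [pow_pos hβ0 n]
    · rw [bnd, Finset.lt_inf'_iff]
      intro k hk
      have hk' : k ≤ n := by
        have := Finset.mem_range.mp hk; omega
      have h2 := (h k hk').2
      have hp : (0:ℝ) < β ^ k := pow_pos hβ0 k
      rw [mul_comm, ← lt_div_iff₀ hp] at h2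
      have : (β ^ k)⁻¹ = 1 / β ^ k := (one_div _).symm
      linarith [h2, (this ▸ le_refl ((β ^ k)⁻¹) : (β^k)⁻¹ ≤ 1/β^k)]
  · rintro ⟨h1, h2⟩ k hk
    have hp : (0:ℝ) < β ^ k := pow_pos hβ0 k
    have hPk : P β ω k ≤ x := le_trans (P_mono hβ0 hω hk) h1
    constructor
    · nlinarith
    · rw [bnd, Finset.lt_inf'_iff] at h2
      have := h2 k (Finset.mem_range.mpr (by omega))
      have hx : x - P β ω k < (β ^ k)⁻¹ := by linarith
      calc β ^ k * (x - P β ω k) < β ^ k * (β ^ k)⁻¹ := by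
            exact mul_lt_mul_of_pos_left hx hp
        _ = 1 := mul_inv_cancel₀ (ne_of_gt hp)

lemma bnd_le {β : ℝ} (ω : ℕ → ℤ) (n : ℕ) :
    bnd β ω n ≤ P β ω n + (β ^ n)⁻¹ :=
  Finset.inf'_le _ (Finset.mem_range.mpr (Nat.lt_succ_self n))

def A (β : ℝ) (n : ℕ) : Set (ℕ → ℤ) :=
  {ω | isAdmissible β n ω ∧ ∀ k, n ≤ k → ω k = 0}

lemma eps_bounds {β : ℝ} (hβ : 1 < β) {x : ℝ} (hx : x ∈ Set.Ico (0:ℝ) 1) (k : ℕ) :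
    0 ≤ eps β x (k+1) ∧ eps β x (k+1) ≤ ⌊β⌋ := by
  have h := iter_mem (β := β) x hx k
  rw [eps_eq]
  constructor
  · exact Int.floor_nonneg.mpr (mul_nonneg (le_of_lt (lt_trans one_pos hβ)) h.1)
  · apply Int.floor_le_floor
    nlinarith [h.1, h.2]

lemma A_digit_nonneg {β : ℝ} (hβ : 1 < β) {n : ℕ} {ρ : ℕ → ℤ} (hρ : ρ ∈ A β n) :
    ∀ i < n, 0 ≤ ρ i := by
  intro i hi
  obtain ⟨⟨x, hx, hd⟩, -⟩ := hρ
  rw [← hd i hi]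
  exact (eps_bounds hβ hx i).1

lemma finite_A {β : ℝ} (hβ : 1 < β) (n : ℕ) : (A β n).Finite := by
  classical
  set F : (ℕ → ℤ) → (Fin n → ℤ) := fun ω k => ω k with hF
  have hinj : Set.InjOn F (A β n) := by
    intro ω hω ω' hω' h
    funext k
    by_cases hk : k < n
    · exact congrFun h ⟨k, hk⟩
    · rw [hω.2 k (by omega), hω'.2 k (by omega)]
  have hsub : F '' (A β n) ⊆ Set.pi Set.univ (fun _ : Fin n => Set.Icc (0:ℤ) ⌊β⌋) := by
    rintro x ⟨ω, hω, rfl⟩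
    intro k _
    obtain ⟨⟨x, hx, hd⟩, -⟩ := hω
    have : ω k = eps β x (k+1) := (hd k k.2).symm
    simp only [hF, Set.mem_Icc, this]
    exact (eps_bounds hβ hx k)
  exact Set.Finite.of_finite_image
    ((Set.Finite.pi (fun _ => Set.finite_Icc _ _)).subset hsub) hinj

lemma image_A {β : ℝ} (n : ℕ) :
    (fun (ω : ℕ → ℤ) (k : Fin n) => ω k) '' (A β n) =
      {ω : Fin n → ℤ | ∃ x ∈ Set.Ico (0 : ℝ) 1, ∀ k : Fin n, eps β x (k + 1) = ω k} := by
  classical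
  ext σ
  constructor
  · rintro ⟨ω, ⟨⟨x, hx, hd⟩, -⟩, rfl⟩
    exact ⟨x, hx, fun k => hd k k.2⟩
  · rintro ⟨x, hx, hd⟩
    refine ⟨fun k => if hk : k < n then σ ⟨k, hk⟩ else 0, ⟨⟨x, hx, ?_⟩, ?_⟩, ?_⟩
    · intro k hk
      simp only [dif_pos hk]
      exact hd ⟨k, hk⟩
    · intro k hk
      simp [Nat.not_lt_of_le hk]
    · funext k
      simp [k.2]

lemma len_pos {β : ℝ} (hβ : 1 < β) {n : ℕ} {ρ : ℕ → ℤ} (hρ : ρ ∈ A β n) :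
    0 < bnd β ρ n - P β ρ n := by
  obtain ⟨x, hx, hd⟩ := hρ.1
  have hc : x ∈ cylinder β n ρ := ⟨hx, hd⟩
  rw [cylinder_eq hβ ρ n (A_digit_nonneg hβ hρ)] at hc
  linarith [hc.1, hc.2]

lemma sum_len_eq_one {β : ℝ} (hβ : 1 < β) (n : ℕ) :
    ∑ ρ ∈ (finite_A hβ n).toFinset, (bnd β ρ n - P β ρ n) = 1 := by
  classical
  set t := (finite_A hβ n).toFinset with ht
  have hmem : ∀ ρ, ρ ∈ t ↔ ρ ∈ A β n := fun ρ => Set.Finite.mem_toFinset _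
  have hdisj : (↑t : Set (ℕ → ℤ)).PairwiseDisjoint (fun ρ => cylinder β n ρ) := by
    intro ρ hρ ρ' hρ' hne
    refine Set.disjoint_left.mpr fun x hx hx' => hne ?_
    funext k
    by_cases hk : k < n
    · rw [← hx.2 k hk, ← hx'.2 k hk]
    · rw [((hmem ρ).mp hρ).2 k (by omega), ((hmem ρ').mp hρ').2 k (by omega)]
  have hmeas : ∀ ρ ∈ t, MeasurableSet (cylinder β n ρ) := by
    intro ρ hρ
    rw [cylinder_eq hβ ρ n (A_digit_nonneg hβ ((hmem ρ).mp hρ))]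
    exact measurableSet_Ico
  have hvol : volume (⋃ ρ ∈ t, cylinder β n ρ) = ∑ ρ ∈ t, volume (cylinder β n ρ) :=
    measure_biUnion_finset hdisj hmeas
  have hunion : (⋃ ρ ∈ t, cylinder β n ρ) = Set.Ico (0:ℝ) 1 := by
    apply Set.Subset.antisymm
    · refine Set.iUnion₂_subset fun ρ hρ => fun x hx => hx.1
    · intro x hx
      have hρA : (fun k => if k < n then eps β x (k+1) else 0) ∈ A β n :=
        ⟨⟨x, hx, fun k hk => by simp [hk]⟩, fun k hk => by simp [Nat.not_lt_of_le hk]⟩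
      exact Set.mem_iUnion₂.mpr ⟨_, (hmem _).mpr hρA, ⟨hx, fun k hk => by simp [hk]⟩⟩
  have hv : ∀ ρ ∈ t, volume (cylinder β n ρ) = ENNReal.ofReal (bnd β ρ n - P β ρ n) := by
    intro ρ hρ
    rw [cylinder_eq hβ ρ n (A_digit_nonneg hβ ((hmem ρ).mp hρ)), Real.volume_Ico]
  rw [hunion, Real.volume_Ico, Finset.sum_congr rfl hv] at hvol
  rw [← ENNReal.ofReal_sum_of_nonneg (fun ρ hρ => le_of_lt (len_pos hβ ((hmem ρ).mp hρ)))] at hvol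
  have h1 : ENNReal.ofReal ((1:ℝ) - 0) = ENNReal.ofReal 1 := by norm_num
  rw [h1] at hvol
  exact ((ENNReal.ofReal_eq_ofReal_iff (by norm_num)
    (Finset.sum_nonneg (fun ρ hρ => le_of_lt (len_pos hβ ((hmem ρ).mp hρ))))).mp hvol).symm

lemma card_lower {β : ℝ} (hβ : 1 < β) (n : ℕ) :
    β ^ n ≤ ((finite_A hβ n).toFinset.card : ℝ) := by
  classical
  have hsum := sum_len_eq_one hβ n
  set t := (finite_A hβ n).toFinset with ht
  have hle : ∑ ρ ∈ t, (bnd β ρ n - P β ρ n) ≤ ∑ _ρ ∈ t, (β ^ n)⁻¹ :=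
    Finset.sum_le_sum fun ρ hρ => by linarith [bnd_le (β := β) ρ n]
  rw [Finset.sum_const, nsmul_eq_mul] at hle
  rw [hsum] at hle
  have hp : (0:ℝ) < β ^ n := pow_pos (by linarith) n
  have h2 := mul_le_mul_of_nonneg_right hle hp.le
  rw [one_mul, mul_assoc, inv_mul_cancel₀ (ne_of_gt hp), mul_one] at h2
  exact h2

lemma card_succ {β : ℝ} (hβ : 1 < β) (n : ℕ) :
    (((finite_A hβ (n+1)).toFinset.card : ℝ)) ≤
      β ^ (n+1) + ((finite_A hβ n).toFinset.card : ℝ) := by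
  classical
  have hβ0 : (0:ℝ) < β := by linarith
  set t1 := (finite_A hβ (n+1)).toFinset with ht1
  set t0 := (finite_A hβ n).toFinset with ht0
  set r : (ℕ → ℤ) → (ℕ → ℤ) := fun ω k => if k < n then ω k else 0 with hr
  have hmem1 : ∀ ρ, ρ ∈ t1 ↔ ρ ∈ A β (n+1) := fun _ => Set.Finite.mem_toFinset _
  have hmem0 : ∀ ρ, ρ ∈ t0 ↔ ρ ∈ A β n := fun _ => Set.Finite.mem_toFinset _
  have hmap : ∀ ω ∈ t1, r ω ∈ t0 := by
    intro ω hω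
    obtain ⟨⟨x, hx, hd⟩, hpad⟩ := (hmem1 ω).mp hω
    refine (hmem0 _).mpr ⟨⟨x, hx, fun k hk => ?_⟩, fun k hk => if_neg (by omega)⟩
    simp only [hr, if_pos hk]
    exact hd k (by omega)
  have hcard := Finset.card_eq_sum_card_fiberwise hmap
  have hfib : ∀ ρ ∈ t0, ((t1.filter (fun ω => r ω = ρ)).card : ℝ) ≤
      β ^ (n+1) * (bnd β ρ n - P β ρ n) + 1 := by
    intro ρ hρ
    set c := β ^ (n+1) * (bnd β ρ n - P β ρ n) with hc
    have hc0 : 0 < c := mul_pos (pow_pos hβ0 _) (len_pos hβ ((hmem0 ρ).mp hρ))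
    have hmemfib : ∀ ω ∈ t1.filter (fun ω => r ω = ρ), ω n ∈ Finset.Ico (0:ℤ) ⌈c⌉ := by
      intro ω hω
      obtain ⟨hω1, hrω⟩ := Finset.mem_filter.mp hω
      obtain ⟨⟨x, hx, hd⟩, hpad⟩ := (hmem1 ω).mp hω1
      have hdn : ∀ k < n, eps β x (k+1) = ω k := fun k hk => hd k (by omega)
      have hωρ : ∀ k < n, ω k = ρ k := by
        intro k hk
        have := congrFun hrω k
        simpa [hr, if_pos hk] using this
      have hPeq : P β ω n = P β ρ n :=
        Finset.sum_congr rfl fun i hi => by rw [hωρ i (Finset.mem_range.mp hi)]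
      have hfloor : ω n = ⌊β ^ (n+1) * (x - P β ρ n)⌋ := by
        rw [← hd n (by omega), eps_eq, iter_eq hβ0 x ω n hdn]
        congr 1
        rw [← hPeq]; ring
      have hxcyl : x ∈ cylinder β n ρ :=
        ⟨hx, fun k hk => (hdn k hk).trans (hωρ k hk)⟩
      rw [cylinder_eq hβ ρ n (A_digit_nonneg hβ ((hmem0 ρ).mp hρ))] at hxcyl
      have h0 : 0 ≤ ω n := by
        rw [← hd n (by omega)]
        exact (eps_bounds hβ hx n).1
      have hub : (ω n : ℝ) < c := by
        have h1 : (ω n : ℝ) ≤ β ^ (n+1) * (x - P β ρ n) := by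
          rw [hfloor]; exact Int.floor_le _
        have h2 : β ^ (n+1) * (x - P β ρ n) < c := by
          rw [hc]
          apply mul_lt_mul_of_pos_left _ (pow_pos hβ0 _)
          have := hxcyl.2
          linarith
        linarith
      exact Finset.mem_Ico.mpr ⟨h0, Int.lt_ceil.mpr hub⟩
    have hinj : Set.InjOn (fun ω : ℕ → ℤ => ω n) ↑(t1.filter (fun ω => r ω = ρ)) := by
      intro ω hω ω' hω' hnn
      simp only [Finset.coe_filter, Set.mem_setOf_eq] at hω hω'
      obtain ⟨hω1, hrω⟩ := hω
      obtain ⟨hω1', hrω'⟩ := hω'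
      funext k
      rcases lt_trichotomy k n with hk | hk | hk
      · have h1 := congrFun hrω k
        have h2 := congrFun hrω' k
        simp only [hr, if_pos hk] at h1 h2
        rw [h1, h2]
      · rw [hk]; exact hnn
      · have hk' : n + 1 ≤ k := hk
        have p1 := ((hmem1 ω).mp hω1).2 k hk'
        have p2 := ((hmem1 ω').mp hω1').2 k hk'
        rw [p1, p2]
    have hcle := Finset.card_le_card_of_injOn (fun ω : ℕ → ℤ => ω n) hmemfib hinj
    have hIco : ((Finset.Ico (0:ℤ) ⌈c⌉).card : ℝ) ≤ c + 1 := by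
      rw [Int.card_Ico]
      have hcnn : (0:ℤ) ≤ ⌈c⌉ := Int.ceil_nonneg (le_of_lt hc0)
      have : ((⌈c⌉ - 0).toNat : ℝ) = (⌈c⌉ : ℝ) := by
        rw [Int.sub_zero]
        exact_mod_cast Int.toNat_of_nonneg hcnn
      rw [this]
      linarith [Int.ceil_lt_add_one c]
    calc ((t1.filter (fun ω => r ω = ρ)).card : ℝ)
        ≤ ((Finset.Ico (0:ℤ) ⌈c⌉).card : ℝ) := by exact_mod_cast hcle
      _ ≤ c + 1 := hIco
  have : ((t1.card : ℝ)) ≤ ∑ ρ ∈ t0, (β ^ (n+1) * (bnd β ρ n - P β ρ n) + 1) := by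
    rw [hcard]
    push_cast
    exact Finset.sum_le_sum hfib
  rw [Finset.sum_add_distrib, ← Finset.mul_sum, Finset.sum_const, nsmul_eq_mul, mul_one] at this
  rw [sum_len_eq_one hβ n] at this
  linarith

lemma card_zero {β : ℝ} (hβ : 1 < β) : (finite_A hβ 0).toFinset.card = 1 := by
  classical
  have hA : A β 0 = {fun _ => (0:ℤ)} := by
    ext ω
    constructor
    · rintro ⟨-, hpad⟩
      have : ω = fun _ => (0:ℤ) := funext fun k => hpad k (Nat.zero_le k)
      exact this
    · intro h
      have hω : ω = fun _ => (0:ℤ) := h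
      subst hω
      exact ⟨⟨0, ⟨le_refl 0, one_pos⟩, fun k hk => absurd hk (Nat.not_lt_zero k)⟩,
        fun k _ => rfl⟩
  apply Finset.card_eq_one.mpr
  refine ⟨fun _ => (0:ℤ), ?_⟩
  ext ω
  simp only [Set.Finite.mem_toFinset, hA, Set.mem_singleton_iff, Finset.mem_singleton]

lemma card_upper {β : ℝ} (hβ : 1 < β) (n : ℕ) :
    ((finite_A hβ n).toFinset.card : ℝ) ≤ ∑ k ∈ Finset.range (n+1), β ^ k := by
  induction n with
  | zero => simp [card_zero hβ]
  | succ n ih =>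
    have h := card_succ hβ n
    rw [Finset.sum_range_succ]
    linarith

lemma geom_le {β : ℝ} (hβ : 1 < β) (n : ℕ) :
    ∑ k ∈ Finset.range (n+1), β ^ k ≤ β ^ (n+1) / (β - 1) := by
  have hb : (0:ℝ) < β - 1 := by linarith
  rw [le_div_iff₀ hb, geom_sum_mul]
  have : (0:ℝ) < β ^ (n+1) := pow_pos (by linarith) _
  linarith

lemma injOn_F (β : ℝ) (n : ℕ) :
    Set.InjOn (fun (ω : ℕ → ℤ) (k : Fin n) => ω k) (A β n) := by
  intro ω hω ω' hω' h
  funext k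
  by_cases hk : k < n
  · exact congrFun h ⟨k, hk⟩
  · rw [hω.2 k (by omega), hω'.2 k (by omega)]

end Renyi


theorem stmt3 (β : ℝ) (hβ : 1 < β) (n : ℕ) (hn : 1 ≤ n) :
    β ^ n ≤ ({ω : Fin n → ℤ | ∃ x ∈ Set.Ico (0 : ℝ) 1,
        ∀ k : Fin n, eps β x (k + 1) = ω k}.ncard : ℝ) ∧
    ({ω : Fin n → ℤ | ∃ x ∈ Set.Ico (0 : ℝ) 1,
        ∀ k : Fin n, eps β x (k + 1) = ω k}.ncard : ℝ) ≤ β ^ (n + 1) / (β - 1) := by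
  have hA : ({ω : Fin n → ℤ | ∃ x ∈ Set.Ico (0 : ℝ) 1,
      ∀ k : Fin n, eps β x (k + 1) = ω k}).ncard = (Renyi.finite_A hβ n).toFinset.card := by
    rw [← Renyi.image_A (β := β) n, Set.ncard_image_of_injOn (Renyi.injOn_F β n),
      Set.ncard_eq_toFinset_card _ (Renyi.finite_A hβ n)]
  rw [hA]
  exact ⟨Renyi.card_lower hβ n, le_trans (Renyi.card_upper hβ n) (Renyi.geom_le hβ n)⟩
end

section
/- Let β > 1 and x ∈ [0,1]. For 0 < b < 1, the lim sup of r_n(x,β)/n as n → ∞ equals b if and only if the exponent v_β(x) equals b/(1-b), where v_β(x) is the supremum of the real numbers v for which T_β^n(x) ≤ β^{-nv} holds for infinitely many positive integers n. -/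
open Filter MeasureTheory Set

section basics
variable {β x : ℝ}

lemma betaT_eq_fract (β y : ℝ) : betaT β y = Int.fract (β * y) := rfl

lemma t_nonneg (hx : 0 ≤ x) : ∀ n, 0 ≤ (betaT β)^[n] x := by
  intro n
  cases n with
  | zero => simpa
  | succ m =>
    rw [Function.iterate_succ_apply', betaT_eq_fract]
    exact Int.fract_nonneg _

lemma t_lt_one (β : ℝ) (hx : x ≤ 1) : ∀ n, 1 ≤ n → (betaT β)^[n] x < 1 := by
  intro n hn
  obtain ⟨m, rfl⟩ := Nat.exists_eq_add_of_le hn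
  rw [add_comm, Function.iterate_succ_apply', betaT_eq_fract]
  exact Int.fract_lt_one _

lemma eps_succ (β x : ℝ) (n : ℕ) : eps β x (n + 1) = ⌊β * (betaT β)^[n] x⌋ := by
  simp [eps]

lemma t_succ_of_eps_zero (h : eps β x (n + 1) = 0) :
    (betaT β)^[n + 1] x = β * (betaT β)^[n] x := by
  rw [Function.iterate_succ_apply', betaT]
  rw [eps_succ] at h
  rw [h]
  push_cast
  ring

lemma run_imp_eq (hβ : 1 < β) (hx : 0 ≤ x) (n : ℕ) :
    ∀ k, (∀ j < k, eps β x (n + j + 1) = 0) →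
      (betaT β)^[n + k] x = β ^ k * (betaT β)^[n] x := by
  intro k
  induction k with
  | zero => simp
  | succ m ih =>
    intro h
    have h1 := ih (fun j hj => h j (hj.trans (Nat.lt_succ_self m)))
    have h2 : eps β x (n + m + 1) = 0 := h m (Nat.lt_succ_self m)
    rw [show n + (m + 1) = (n + m) + 1 by ring, t_succ_of_eps_zero h2, h1]
    ring

lemma small_imp_run (hβ : 1 < β) (hx : 0 ≤ x) (n : ℕ) :
    ∀ k, (betaT β)^[n] x * β ^ k < 1 →
      (∀ j < k, eps β x (n + j + 1) = 0) := by
  intro k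
  induction k with
  | zero => simp
  | succ m ih =>
    intro h j hj
    have hβ0 : (0:ℝ) < β := lt_trans one_pos hβ
    have hsmall : (betaT β)^[n] x * β ^ m < 1 := by
      have : (betaT β)^[n] x * β ^ m ≤ (betaT β)^[n] x * β ^ (m+1) := by
        apply mul_le_mul_of_nonneg_left _ (t_nonneg hx n)
        exact pow_le_pow_right₀ hβ.le (Nat.le_succ m)
      linarith
    have hrun := ih hsmall
    rcases Nat.lt_succ_iff_lt_or_eq.mp hj with hj' | hje
    · exact hrun j hj'
    · subst hje -- digit at n + m + 1
      have heq := run_imp_eq hβ hx n j hrun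
      rw [eps_succ]
      have ht : β * (betaT β)^[n + j] x = (betaT β)^[n] x * β ^ (j+1) := by
        rw [heq]; ring
      rw [Int.floor_eq_zero_iff]
      constructor
      · rw [ht]
        exact mul_nonneg (t_nonneg hx n) (by positivity)
      · rw [ht]; exact h

lemma run_iff (hβ : 1 < β) (hx0 : 0 ≤ x) (hx1 : x ≤ 1) (n k : ℕ) (hk : 1 ≤ k) :
    (∀ j < k, eps β x (n + j + 1) = 0) ↔ (betaT β)^[n] x * β ^ k < 1 := by
  constructor
  · intro h
    have heq := run_imp_eq hβ hx0 n k h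
    have := t_lt_one β hx1 (n + k) (by omega)
    rw [heq] at this
    linarith [this]
  · exact small_imp_run hβ hx0 n k

end basics

section runlen
variable {β x : ℝ}

lemma runLen_set_nonempty (β x : ℝ) (n : ℕ) :
    ({j | ∃ i, i + j ≤ n ∧ ∀ k < j, eps β x (i + k + 1) = 0} : Set ℕ).Nonempty :=
  ⟨0, 0, by simp⟩

lemma runLen_set_bddAbove (β x : ℝ) (n : ℕ) :
    BddAbove {j | ∃ i, i + j ≤ n ∧ ∀ k < j, eps β x (i + k + 1) = 0} :=
  ⟨n, fun j hj => by obtain ⟨i, hi, -⟩ := hj; omega⟩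

lemma runLen_le (β x : ℝ) (n : ℕ) : runLen β x n ≤ n := by
  apply csSup_le (runLen_set_nonempty β x n)
  rintro j ⟨i, hi, -⟩; omega

lemma le_runLen (β x : ℝ) {n k i : ℕ} (hi : i + k ≤ n)
    (h : ∀ j < k, eps β x (i + j + 1) = 0) : k ≤ runLen β x n :=
  le_csSup (runLen_set_bddAbove β x n) ⟨i, hi, h⟩

lemma runLen_mem (β x : ℝ) (n : ℕ) :
    ∃ i, i + runLen β x n ≤ n ∧ ∀ k < runLen β x n, eps β x (i + k + 1) = 0 :=
  Nat.sSup_mem (runLen_set_nonempty β x n) (runLen_set_bddAbove β x n)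

lemma u_nonneg (β x : ℝ) (N : ℕ) : 0 ≤ (runLen β x N : ℝ) / N := by positivity

lemma u_le_one (β x : ℝ) (N : ℕ) : (runLen β x N : ℝ) / N ≤ 1 := by
  rcases Nat.eq_zero_or_pos N with rfl | hN
  · simp
  · rw [div_le_one (by exact_mod_cast hN)]
    exact_mod_cast runLen_le β x N

lemma u_bdd_above (β x : ℝ) :
    IsBoundedUnder (· ≤ ·) atTop (fun N : ℕ => (runLen β x N : ℝ) / N) :=
  isBoundedUnder_of ⟨1, u_le_one β x⟩

lemma u_bdd_below (β x : ℝ) :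
    IsBoundedUnder (· ≥ ·) atTop (fun N : ℕ => (runLen β x N : ℝ) / N) :=
  isBoundedUnder_of ⟨0, u_nonneg β x⟩

end runlen

section main
variable {β x : ℝ}

/-- If `v ∈ S` then limsup ≥ v/(1+v). -/
lemma L1 (hβ : 1 < β) (hx0 : 0 ≤ x) (hx1 : x ≤ 1) {v : ℝ} (hv : 0 < v)
    (hS : ∃ᶠ n : ℕ in atTop, (betaT β)^[n] x ≤ β ^ (-((n : ℝ) * v))) :
    v / (1 + v) ≤ limsup (fun N : ℕ => (runLen β x N : ℝ) / N) atTop := by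
  apply le_of_forall_lt_imp_le_of_dense
  intro a ha
  apply le_limsup_of_frequently_le _ (u_bdd_above β x)
  rcases le_or_gt a 0 with ha0 | ha0
  · exact Eventually.frequently (Eventually.of_forall fun N => ha0.trans (u_nonneg β x N))
  have h1v : (0:ℝ) < 1 + v := by linarith
  have hδ : 0 < v - a * (1 + v) := by
    have := (lt_div_iff₀ h1v).1 ha; linarith
  set δ := v - a * (1 + v) with hδdef
  rw [frequently_atTop]
  intro M
  -- pick n ≥ max M n₀ with t n ≤ β^{-nv}
  obtain ⟨n, hn, htn⟩ := frequently_atTop.1 hS (max M (max 1 (⌈1/δ⌉₊ + 1)))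
  have hn1 : 1 ≤ n := le_trans (le_trans (le_max_left _ _) (le_max_right _ _)) hn
  have hnδ : 1 ≤ (n : ℝ) * δ := by
    have h2 : (⌈1/δ⌉₊ + 1 : ℕ) ≤ n := le_trans (le_trans (le_max_right _ _) (le_max_right _ _)) hn
    have h3 : (1:ℝ)/δ ≤ ⌈(1:ℝ)/δ⌉₊ := Nat.le_ceil _
    have h4 : (⌈(1:ℝ)/δ⌉₊ + 1 : ℝ) ≤ n := by exact_mod_cast h2
    calc (1:ℝ) = (1/δ) * δ := by field_simp
    _ ≤ (n:ℝ) * δ := by nlinarith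
  have hn1' : (1:ℝ) ≤ (n:ℝ) := by exact_mod_cast hn1
  have hnv1 : 1 < (n:ℝ) * v := by nlinarith [mul_pos ha0 h1v]
  have hnv0 : 0 ≤ (n:ℝ) * v := by positivity
  set k : ℕ := ⌈(n:ℝ) * v⌉₊ - 1 with hkdef
  have hk1 : 1 ≤ k := by
    have : 2 ≤ ⌈(n:ℝ) * v⌉₊ := by
      by_contra hc
      push_neg at hc
      interval_cases h : ⌈(n:ℝ) * v⌉₊ <;> [skip; skip] <;>
        · have := Nat.le_ceil ((n:ℝ) * v); rw [h] at this; norm_num at this; linarith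
    omega
  have hceil : (⌈(n:ℝ)*v⌉₊ : ℝ) = (k : ℝ) + 1 := by
    have : ⌈(n:ℝ)*v⌉₊ = k + 1 := by omega
    exact_mod_cast this
  have hklt : (k : ℝ) < (n:ℝ) * v := by
    have := Nat.ceil_lt_add_one hnv0
    rw [hceil] at this; linarith
  have hkge : (n:ℝ) * v - 1 ≤ (k : ℝ) := by
    have := Nat.le_ceil ((n:ℝ) * v)
    rw [hceil] at this; linarith
  -- run of length k at n
  have hrun : ∀ j < k, eps β x (n + j + 1) = 0 := by
    apply (run_iff hβ hx0 hx1 n k hk1).2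
    have hb0 : (0:ℝ) < β := lt_trans one_pos hβ
    have h5 : (betaT β)^[n] x * β ^ k ≤ β ^ (-((n:ℝ) * v)) * β ^ ((k:ℝ)) := by
      rw [Real.rpow_natCast]
      exact mul_le_mul_of_nonneg_right htn (by positivity)
    have h6 : β ^ (-((n:ℝ) * v)) * β ^ ((k:ℝ)) = β ^ ((k:ℝ) - (n:ℝ)*v) := by
      rw [← Real.rpow_add hb0]; ring_nf
    have h7 : β ^ ((k:ℝ) - (n:ℝ)*v) < 1 := by
      rw [show (1:ℝ) = β ^ (0:ℝ) by rw [Real.rpow_zero]]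
      exact (Real.rpow_lt_rpow_left_iff hβ).2 (by linarith)
    calc (betaT β)^[n] x * β ^ k ≤ β ^ ((k:ℝ) - (n:ℝ)*v) := by rw [← h6]; exact h5
    _ < 1 := h7
  refine ⟨n + k, le_trans (le_trans (le_max_left _ _) hn) (Nat.le_add_right n k), ?_⟩
  have hrN : k ≤ runLen β x (n + k) := le_runLen β x le_rfl hrun
  have hN0 : (0:ℝ) < ((n + k : ℕ) : ℝ) := by positivity
  rw [le_div_iff₀ hN0]
  have key : a * ((n:ℝ) + k) ≤ k := by
    have hkle : (k:ℝ) ≤ (n:ℝ) * v := le_of_lt hklt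
    nlinarith [hkge, hkle, hnδ]
  calc a * ((n + k : ℕ) : ℝ) = a * ((n:ℝ) + k) := by push_cast; ring
  _ ≤ (k:ℝ) := key
  _ ≤ (runLen β x (n+k) : ℝ) := by exact_mod_cast hrN
end main

section main2
variable {β x : ℝ}

lemma betaT_zero (β : ℝ) : betaT β 0 = 0 := by simp [betaT]

lemma t_zero_tail {n : ℕ} (h : (betaT β)^[n] x = 0) :
    ∀ m, n ≤ m → (betaT β)^[m] x = 0 := by
  intro m hm
  obtain ⟨d, rfl⟩ := Nat.exists_eq_add_of_le hm
  induction d with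
  | zero => simpa using h
  | succ e ih =>
    rw [show n + (e+1) = (n+e) + 1 by ring, Function.iterate_succ_apply', ih (by omega)]
    exact betaT_zero β

lemma x_pos_of_t_pos (hx0 : 0 ≤ x) (hpos : 0 < (betaT β)^[1] x) : 0 < x := by
  rcases hx0.lt_or_eq with h | h
  · exact h
  · exfalso
    rw [← h] at hpos
    simp [betaT_zero β] at hpos

/-- If `v ∉ S` (eventually not small) and the orbit never hits 0, limsup ≤ v/(1+v). -/
lemma L2 (hβ : 1 < β) (hx0 : 0 ≤ x) (hx1 : x ≤ 1) {v : ℝ} (hv : 0 < v)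
    (hpos : ∀ n : ℕ, 0 < (betaT β)^[n] x)
    (hnS : ∀ᶠ n : ℕ in atTop, ¬ ((betaT β)^[n] x ≤ β ^ (-((n : ℝ) * v)))) :
    limsup (fun N : ℕ => (runLen β x N : ℝ) / N) atTop ≤ v / (1 + v) := by
  have h1v : (0:ℝ) < 1 + v := by linarith
  apply le_of_forall_gt_imp_ge_of_dense
  intro a ha
  have ha0 : 0 < a := lt_trans (by positivity) ha
  obtain ⟨n₁, hn₁⟩ := eventually_atTop.1 hnS
  set m := max n₁ 1 with hm
  have hK : ∀ i : ℕ, ∃ K : ℕ, 1 ≤ K ∧ 1 < (betaT β)^[i] x * β ^ K := by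
    intro i
    obtain ⟨k, hk⟩ := pow_unbounded_of_one_lt (1 / (betaT β)^[i] x) hβ
    refine ⟨max k 1, le_max_right _ _, ?_⟩
    have hti := hpos i
    have h2 : (1:ℝ) / (betaT β)^[i] x < β ^ (max k 1) :=
      lt_of_lt_of_le hk (pow_le_pow_right₀ hβ.le (le_max_left _ _))
    rw [div_lt_iff₀ hti] at h2
    calc (1:ℝ) < β ^ (max k 1) * (betaT β)^[i] x := h2
    _ = (betaT β)^[i] x * β ^ (max k 1) := by ring
  choose K hK1 hKgt using hK
  set C := (Finset.range m).sup K with hC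
  -- runs starting below m are bounded by C
  have claim1 : ∀ i j : ℕ, i < m → (∀ l < j, eps β x (i + l + 1) = 0) → j ≤ C := by
    intro i j him hrun
    by_contra hc
    push_neg at hc
    have hKiC : K i ≤ C := Finset.le_sup (Finset.mem_range.2 him)
    have hKij : K i ≤ j := by omega
    have hrun' : ∀ l < K i, eps β x (i + l + 1) = 0 := fun l hl => hrun l (lt_of_lt_of_le hl hKij)
    have := (run_iff hβ hx0 hx1 i (K i) (hK1 i)).1 hrun'
    linarith [hKgt i]
  -- runs starting at i ≥ m have length < v * i
  have claim2 : ∀ i j : ℕ, m ≤ i → (∀ l < j, eps β x (i + l + 1) = 0) → (j:ℝ) < v * i := by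
    intro i j him hrun
    have hi1 : 1 ≤ i := le_trans (le_max_right _ _) him
    have hi1' : (1:ℝ) ≤ (i:ℝ) := by exact_mod_cast hi1
    rcases Nat.eq_zero_or_pos j with rfl | hj
    · push_cast; nlinarith
    have hsmall := (run_iff hβ hx0 hx1 i j hj).1 hrun
    have hbig := hn₁ i (le_trans (le_max_left _ _) him)
    push_neg at hbig
    have hb0 : (0:ℝ) < β := lt_trans one_pos hβ
    have h8 : β ^ (-((i:ℝ)*v)) * β ^ ((j:ℝ)) < 1 := by
      rw [← Real.rpow_natCast β j] at hsmall
      nlinarith [Real.rpow_pos_of_pos hb0 ((j:ℝ))]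
    rw [← Real.rpow_add hb0, show (1:ℝ) = β ^ (0:ℝ) by rw [Real.rpow_zero],
      Real.rpow_lt_rpow_left_iff hβ] at h8
    linarith
  -- eventual bound
  have hev : ∀ᶠ N : ℕ in atTop, (runLen β x N : ℝ) / N ≤ a := by
    rw [eventually_atTop]
    refine ⟨max 1 (⌈(C:ℝ)/a⌉₊ + 1), fun N hN => ?_⟩
    have hN1 : 1 ≤ N := le_trans (le_max_left _ _) hN
    have hN0 : (0:ℝ) < (N:ℝ) := by exact_mod_cast hN1
    have hNC : (C:ℝ)/a < N := by
      have h2 : (⌈(C:ℝ)/a⌉₊ + 1 : ℕ) ≤ N := le_trans (le_max_right _ _) hN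
      have h3 : ((C:ℝ))/a ≤ ⌈(C:ℝ)/a⌉₊ := Nat.le_ceil _
      have h4 : (⌈(C:ℝ)/a⌉₊ + 1 : ℝ) ≤ N := by exact_mod_cast h2
      linarith
    obtain ⟨i, hiN, hrun⟩ := runLen_mem β x N
    set j := runLen β x N with hj
    rw [div_le_iff₀ hN0]
    rcases lt_or_ge i m with him | him
    · have hjC := claim1 i j him hrun
      have : (j:ℝ) ≤ (C:ℝ) := by exact_mod_cast hjC
      calc (j:ℝ) ≤ (C:ℝ) := this
      _ = ((C:ℝ)/a) * a := by field_simp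
      _ ≤ (N:ℝ) * a := by nlinarith
      _ = a * (N:ℝ) := by ring
    · have hjvi := claim2 i j him hrun
      have hiNj : (i:ℝ) ≤ (N:ℝ) - (j:ℝ) := by
        have : (i + j : ℕ) ≤ N := hiN
        have := (Nat.cast_le (α := ℝ)).2 this
        push_cast at this; linarith
      have h9 : (j:ℝ) < v * ((N:ℝ) - (j:ℝ)) := lt_of_lt_of_le hjvi (by nlinarith)
      have h10 : (j:ℝ) * (1 + v) < v * N := by nlinarith
      have h11 : (j:ℝ) < (v/(1+v)) * N := by
        rw [div_mul_eq_mul_div, lt_div_iff₀ h1v]; nlinarith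
      nlinarith
  exact limsup_le_of_le ((u_bdd_below β x).isCoboundedUnder_flip) hev

end main2

section zerocase
variable {β x : ℝ}

lemma limsup_ge_one_of_zero (hβ : 1 < β) {n₀ : ℕ} (h : (betaT β)^[n₀] x = 0) :
    (1:ℝ) ≤ limsup (fun N : ℕ => (runLen β x N : ℝ) / N) atTop := by
  apply le_of_forall_lt_imp_le_of_dense
  intro a ha
  apply le_limsup_of_frequently_le _ (u_bdd_above β x)
  rcases le_or_gt a 0 with ha0 | ha0
  · exact Eventually.frequently (Eventually.of_forall fun N => ha0.trans (u_nonneg β x N))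
  apply Eventually.frequently
  rw [eventually_atTop]
  refine ⟨max 1 (⌈(n₀:ℝ)/(1-a)⌉₊ + 1), fun N hN => ?_⟩
  have hN1 : 1 ≤ N := le_trans (le_max_left _ _) hN
  have hN0 : (0:ℝ) < (N:ℝ) := by exact_mod_cast hN1
  have h1a : (0:ℝ) < 1 - a := by linarith
  have hNn : (n₀:ℝ)/(1-a) < N := by
    have h2 : (⌈(n₀:ℝ)/(1-a)⌉₊ + 1 : ℕ) ≤ N := le_trans (le_max_right _ _) hN
    have h3 := Nat.le_ceil ((n₀:ℝ)/(1-a))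
    have h4 : (⌈(n₀:ℝ)/(1-a)⌉₊ + 1 : ℝ) ≤ N := by exact_mod_cast h2
    linarith
  have hn₀N : n₀ ≤ N := by
    by_contra hc
    push_neg at hc
    have : (N:ℝ) < (n₀:ℝ) := by exact_mod_cast hc
    have : (n₀:ℝ)/(1-a) < n₀ := lt_trans hNn this
    rw [div_lt_iff₀ h1a] at this
    nlinarith [Nat.cast_nonneg (α := ℝ) n₀]
  -- run of length N - n₀ at n₀
  have hrun : ∀ l < N - n₀, eps β x (n₀ + l + 1) = 0 := by
    intro l hl
    rw [eps_succ]
    have : (betaT β)^[n₀ + l] x = 0 := t_zero_tail h (n₀ + l) (Nat.le_add_right _ _)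
    rw [this]
    simp
  have hr : N - n₀ ≤ runLen β x N := le_runLen β x (by omega) hrun
  rw [le_div_iff₀ hN0]
  have hr' : ((N - n₀ : ℕ) : ℝ) ≤ (runLen β x N : ℝ) := by exact_mod_cast hr
  have hcast : ((N - n₀ : ℕ) : ℝ) = (N:ℝ) - (n₀:ℝ) := by
    exact_mod_cast Nat.cast_sub (R := ℝ) hn₀N
  rw [hcast] at hr'
  have : (n₀:ℝ) ≤ (1-a) * N := by
    rw [div_lt_iff₀ h1a] at hNn; nlinarith
  nlinarith

lemma vbeta_eq_zero_of_zero (hβ : 1 < β) {n₀ : ℕ} (h : (betaT β)^[n₀] x = 0) :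
    vbeta β x = 0 := by
  have hb0 : (0:ℝ) < β := lt_trans one_pos hβ
  have hmem : ∀ v : ℝ, 0 ≤ v →
      v ∈ {v | 0 ≤ v ∧ ∃ᶠ n : ℕ in atTop, (betaT β)^[n] x ≤ β ^ (-((n : ℝ) * v))} := by
    intro v hv
    refine ⟨hv, Eventually.frequently ?_⟩
    rw [eventually_atTop]
    refine ⟨n₀, fun n hn => ?_⟩
    rw [t_zero_tail h n hn]
    exact le_of_lt (Real.rpow_pos_of_pos hb0 _)
  have hnb : ¬ BddAbove {v | 0 ≤ v ∧ ∃ᶠ n : ℕ in atTop, (betaT β)^[n] x ≤ β ^ (-((n : ℝ) * v))} := by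
    rintro ⟨c, hc⟩
    have h1 := hc (hmem (max c 0 + 1) (by positivity))
    have h2 : c ≤ max c 0 := le_max_left _ _
    linarith
  rw [vbeta, csSup_of_not_bddAbove hnb, Real.sSup_empty]

lemma S_down (hβ : 1 < β) {v v' : ℝ} (h0 : 0 ≤ v') (hle : v' ≤ v)
    (hv : ∃ᶠ n : ℕ in atTop, (betaT β)^[n] x ≤ β ^ (-((n : ℝ) * v))) :
    ∃ᶠ n : ℕ in atTop, (betaT β)^[n] x ≤ β ^ (-((n : ℝ) * v')) := by
  apply hv.mono
  intro n hn
  apply hn.trans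
  apply (Real.rpow_le_rpow_left_iff hβ).2
  have hn0 : (0:ℝ) ≤ (n:ℝ) := Nat.cast_nonneg n
  nlinarith

lemma zero_mem_S (hβ : 1 < β) (hx1 : x ≤ 1) :
    (0:ℝ) ∈ {v | 0 ≤ v ∧ ∃ᶠ n : ℕ in atTop, (betaT β)^[n] x ≤ β ^ (-((n : ℝ) * v))} := by
  refine ⟨le_refl 0, Eventually.frequently ?_⟩
  rw [eventually_atTop]
  refine ⟨1, fun n hn => ?_⟩
  have : β ^ (-((n:ℝ) * 0)) = 1 := by rw [mul_zero, neg_zero, Real.rpow_zero]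
  rw [this]
  exact le_of_lt (t_lt_one β hx1 n hn)

end zerocase

section final
variable {β x : ℝ}

def Sset (β x : ℝ) : Set ℝ :=
  {v | 0 ≤ v ∧ ∃ᶠ n : ℕ in atTop, (betaT β)^[n] x ≤ β ^ (-((n : ℝ) * v))}

lemma vbeta_eq (β x : ℝ) : vbeta β x = sSup (Sset β x) := rfl

lemma div_ratio_eq {a' : ℝ} (h1a' : 0 < 1 - a') :
    a' / (1 - a') / (1 + a' / (1 - a')) = a' := by
  have hne : (1:ℝ) - a' ≠ 0 := ne_of_gt h1a'
  field_simp
  ring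

lemma mem_Sset {v : ℝ} :
    v ∈ Sset β x ↔ 0 ≤ v ∧ ∃ᶠ n : ℕ in atTop, (betaT β)^[n] x ≤ β ^ (-((n : ℝ) * v)) :=
  Iff.rfl

theorem stmt6_aux (β : ℝ) (hβ : 1 < β) (x : ℝ) (hx : x ∈ Set.Icc (0 : ℝ) 1)
    (b : ℝ) (hb0 : 0 < b) (hb1 : b < 1) :
    Filter.limsup (fun n : ℕ => (runLen β x n : ℝ) / n) Filter.atTop = b ↔
      vbeta β x = b / (1 - b) := by
  obtain ⟨hx0, hx1⟩ := hx
  have h1b : (0:ℝ) < 1 - b := by linarith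
  set w := b / (1 - b) with hwdef
  have hw0 : 0 < w := div_pos hb0 h1b
  have h1w : (0:ℝ) < 1 + w := by linarith
  by_cases hzero : ∃ n : ℕ, (betaT β)^[n+1] x = 0
  · obtain ⟨n₀, hn₀⟩ := hzero
    constructor
    · intro hL
      exfalso
      have h1 := limsup_ge_one_of_zero hβ hn₀
      rw [hL] at h1; linarith
    · intro hR
      exfalso
      rw [vbeta_eq_zero_of_zero hβ hn₀] at hR
      linarith [hR ▸ hw0]
  · push_neg at hzero
    have hpos : ∀ n : ℕ, 0 < (betaT β)^[n] x := by
      intro n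
      cases n with
      | zero =>
        simp only [Function.iterate_zero, id_eq]
        rcases hx0.lt_or_eq with h | h
        · exact h
        · exfalso
          apply hzero 0
          rw [← h]
          simp [betaT_zero]
      | succ m => exact lt_of_le_of_ne (t_nonneg hx0 (m+1)) (Ne.symm (hzero m))
    have hS0 : (0:ℝ) ∈ Sset β x := zero_mem_S hβ hx1
    constructor
    · intro hL
      rw [vbeta_eq]
      have hub : ∀ v ∈ Sset β x, v ≤ w := by
        rintro v ⟨hv0, hvS⟩
        rcases hv0.lt_or_eq with hv | hv
        · have h1 := L1 hβ hx0 hx1 hv hvS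
          rw [hL] at h1
          have h1v : (0:ℝ) < 1 + v := by linarith
          rw [div_le_iff₀ h1v] at h1
          rw [hwdef, le_div_iff₀ h1b]
          nlinarith
        · rw [← hv]; exact hw0.le
      apply le_antisymm (csSup_le ⟨0, hS0⟩ hub)
      apply le_of_forall_lt_imp_le_of_dense
      intro c hc
      rcases le_or_gt c 0 with hc0 | hc0
      · exact hc0.trans (le_csSup ⟨w, hub⟩ hS0)
      · apply le_csSup ⟨w, hub⟩
        refine ⟨hc0.le, ?_⟩
        by_contra hcS
        rw [Filter.not_frequently] at hcS
        have h2 := L2 hβ hx0 hx1 hc0 hpos hcS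
        rw [hL] at h2
        have h1c : (0:ℝ) < 1 + c := by linarith
        have h3 : c * (1 - b) < b := by
          rw [hwdef, lt_div_iff₀ h1b] at hc; exact hc
        rw [le_div_iff₀ h1c] at h2
        nlinarith
    · intro hR
      rw [vbeta_eq] at hR
      have hbdd : BddAbove (Sset β x) := by
        by_contra hnb
        rw [csSup_of_not_bddAbove hnb, Real.sSup_empty] at hR
        linarith [hR ▸ hw0]
      apply le_antisymm
      · apply le_of_forall_gt_imp_ge_of_dense
        intro a hba
        set a' := min a ((b+1)/2) with ha'def
        have ha'b : b < a' := lt_min hba (by linarith)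
        have ha'1 : a' < 1 := lt_of_le_of_lt (min_le_right _ _) (by linarith)
        have h1a' : (0:ℝ) < 1 - a' := by linarith
        set v := a' / (1 - a') with hvdef
        have hv0 : 0 < v := div_pos (by linarith) h1a'
        have hwv : w < v := by
          rw [hwdef, hvdef, div_lt_div_iff₀ h1b h1a']
          nlinarith
        have hvnS : v ∉ Sset β x := by
          intro hvS
          have h4 := le_csSup hbdd hvS
          rw [hR] at h4
          linarith
        have hev : ∀ᶠ n : ℕ in atTop, ¬ ((betaT β)^[n] x ≤ β ^ (-((n:ℝ) * v))) := by
          rw [← Filter.not_frequently]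
          intro hf
          exact hvnS ⟨hv0.le, hf⟩
        have h2 := L2 hβ hx0 hx1 hv0 hpos hev
        have hvv : v / (1 + v) = a' := by
          rw [hvdef, div_ratio_eq h1a']
        calc limsup (fun N : ℕ => (runLen β x N : ℝ) / N) atTop ≤ v / (1+v) := h2
        _ = a' := hvv
        _ ≤ a := min_le_left _ _
      · apply le_of_forall_lt_imp_le_of_dense
        intro c hcb
        rcases le_or_gt c 0 with hc0 | hc0
        · exact hc0.trans (le_limsup_of_frequently_le
            (Eventually.frequently (Eventually.of_forall fun N => u_nonneg β x N))
            (u_bdd_above β x))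
        · have h1c : (0:ℝ) < 1 - c := by linarith
          set v := c / (1 - c) with hvdef
          have hv0 : 0 < v := div_pos hc0 h1c
          have hvw : v < w := by
            rw [hwdef, hvdef, div_lt_div_iff₀ h1c h1b]
            nlinarith
          obtain ⟨s, hsS, hvs⟩ := exists_lt_of_lt_csSup ⟨0, hS0⟩ (by rw [hR]; exact hvw)
          have hvS := S_down hβ hv0.le hvs.le hsS.2
          have h1 := L1 hβ hx0 hx1 hv0 hvS
          have hvv : v / (1 + v) = c := by
            rw [hvdef, div_ratio_eq h1c]
          rw [hvv] at h1
          exact h1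

end final


theorem stmt6 (β : ℝ) (hβ : 1 < β) (x : ℝ) (hx : x ∈ Set.Icc (0 : ℝ) 1)
    (b : ℝ) (hb0 : 0 < b) (hb1 : b < 1) :
    Filter.limsup (fun n : ℕ => (runLen β x n : ℝ) / n) Filter.atTop = b ↔
      vbeta β x = b / (1 - b) := stmt6_aux β hβ x hx b hb0 hb1
end

section
/- Let β > 1 and let ε(1,β) be the sequence of digits of the β-expansion of 1. Then for every k ≥ 1, the shifted sequence σ^k ε(1,β) is lexicographically strictly less than ε(1,β), where σ denotes the one-sided shift. -/
open Filter MeasureTheory Set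

lemma betaT_eq (β x : ℝ) : betaT β x = Int.fract (β * x) := rfl

lemma iter_nonneg (β x : ℝ) (hx : 0 ≤ x) (n : ℕ) : 0 ≤ (betaT β)^[n] x := by
  cases n with
  | zero => simpa
  | succ n => rw [Function.iterate_succ_apply', betaT_eq]; exact Int.fract_nonneg _

lemma iter_le_one (β x : ℝ) (hx : x ≤ 1) (n : ℕ) : (betaT β)^[n] x ≤ 1 := by
  cases n with
  | zero => simpa
  | succ n =>
    rw [Function.iterate_succ_apply', betaT_eq]
    exact (Int.fract_lt_one _).le

lemma key10 (β : ℝ) (hβ : 1 < β) (x y : ℝ) (hx : 0 ≤ x) (hxy : x < y) (hy : y ≤ 1) :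
    lexLt (fun n => ⌊β * (betaT β)^[n] x⌋) (fun n => ⌊β * (betaT β)^[n] y⌋) := by
  have hβ0 : (0:ℝ) < β := lt_trans one_pos hβ
  have hgap : ∀ n, (∀ k < n, ⌊β * (betaT β)^[k] x⌋ = ⌊β * (betaT β)^[k] y⌋) →
      (betaT β)^[n] y - (betaT β)^[n] x = β ^ n * (y - x) := by
    intro n
    induction n with
    | zero => intro _; simp
    | succ n ih =>
      intro h
      have h1 := ih (fun k hk => h k (Nat.lt_succ_of_lt hk))
      have h2 := h n (Nat.lt_succ_self n)
      rw [Function.iterate_succ_apply', Function.iterate_succ_apply']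
      simp only [betaT]
      rw [h2]
      linear_combination β * h1
  have hne : ∃ n, ⌊β * (betaT β)^[n] x⌋ ≠ ⌊β * (betaT β)^[n] y⌋ := by
    by_contra hall
    push_neg at hall
    obtain ⟨n, hn⟩ := pow_unbounded_of_one_lt (1 / (y - x)) hβ
    have hg := hgap n (fun k _ => hall k)
    have hb1 := iter_nonneg β x hx n
    have hb2 := iter_le_one β y hy n
    have hpos : 0 < y - x := by linarith
    rw [div_lt_iff₀ hpos] at hn
    nlinarith
  refine ⟨Nat.find hne, fun k hk => ?_, ?_⟩
  · have := Nat.find_min hne hk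
    simpa using not_not.mp this
  · have hg := hgap (Nat.find hne) (fun k hk => not_not.mp (Nat.find_min hne hk))
    have hlt : (betaT β)^[Nat.find hne] x < (betaT β)^[Nat.find hne] y := by
      nlinarith [pow_pos hβ0 (Nat.find hne)]
    have hle : ⌊β * (betaT β)^[Nat.find hne] x⌋ ≤ ⌊β * (betaT β)^[Nat.find hne] y⌋ :=
      Int.floor_le_floor (by nlinarith)
    exact lt_of_le_of_ne hle (Nat.find_spec hne)

theorem stmt10 (β : ℝ) (hβ : 1 < β) :
    ∀ k : ℕ, 1 ≤ k →
      lexLt (fun n => eps β 1 (n + 1 + k)) (fun n => eps β 1 (n + 1)) := by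
  intro k hk
  obtain ⟨m, rfl⟩ : ∃ m, k = m + 1 := ⟨k - 1, (Nat.succ_pred_eq_of_pos hk).symm⟩
  have hxlt : (betaT β)^[m + 1] 1 < 1 := by
    rw [Function.iterate_succ_apply', betaT_eq]
    exact Int.fract_lt_one _
  obtain ⟨j, h1, h2⟩ := key10 β hβ ((betaT β)^[m + 1] 1) 1
    (iter_nonneg β 1 zero_le_one _) hxlt le_rfl
  have hdig : ∀ n : ℕ, eps β 1 (n + 1 + (m + 1)) = ⌊β * (betaT β)^[n] ((betaT β)^[m + 1] 1)⌋ := by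
    intro n
    have : n + 1 + (m + 1) - 1 = n + (m + 1) := by omega
    rw [eps, this, Function.iterate_add_apply]
  have hdig' : ∀ n : ℕ, eps β 1 (n + 1) = ⌊β * (betaT β)^[n] (1 : ℝ)⌋ := by
    intro n; rw [eps]; norm_num
  exact ⟨j, fun n hn => by simpa [hdig, hdig'] using h1 n hn, by simpa [hdig, hdig'] using h2⟩
end

section
/- Let β > 1. If (ω_1,…,ω_{n-1},ω'_n) is admissible with ω'_n > 0, then for every 0 ≤ ω_n < ω'_n the cylinder I_n(ω_1,…,ω_{n-1},ω_n) is full, i.e., has length exactly β^{-n}. -/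
open Filter MeasureTheory Set

noncomputable def pS (β : ℝ) (ω : ℕ → ℤ) (k : ℕ) : ℝ :=
  ∑ j ∈ Finset.range k, (ω j : ℝ) / β ^ (j + 1)

lemma betaT_mem (β : ℝ) (x : ℝ) : betaT β x ∈ Set.Ico (0 : ℝ) 1 := by
  unfold betaT
  constructor
  · linarith [Int.floor_le (β * x)]
  · linarith [Int.lt_floor_add_one (β * x)]

lemma iter_mem (β x : ℝ) (hx : x ∈ Set.Ico (0 : ℝ) 1) (k : ℕ) :
    (betaT β)^[k] x ∈ Set.Ico (0 : ℝ) 1 := by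
  cases k with
  | zero => simpa using hx
  | succ k => rw [Function.iterate_succ_apply']; exact betaT_mem β _

lemma eps_eq (β x : ℝ) (k : ℕ) : eps β x (k + 1) = ⌊β * (betaT β)^[k] x⌋ := by
  simp [eps]

lemma iter_eq (β : ℝ) (hβ : 0 < β) (ω : ℕ → ℤ) (x : ℝ) :
    ∀ k, (∀ j < k, eps β x (j + 1) = ω j) →
      (betaT β)^[k] x = β ^ k * (x - pS β ω k) := by
  intro k
  induction k with
  | zero => intro _; simp [pS]
  | succ k ih =>
    intro h
    have hk : (betaT β)^[k] x = β ^ k * (x - pS β ω k) := ih fun j hj => h j (by omega)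
    have he : eps β x (k + 1) = ω k := h k (by omega)
    rw [eps_eq] at he
    rw [Function.iterate_succ_apply', betaT, he, hk]
    have hb : (β : ℝ) ^ (k + 1) ≠ 0 := by positivity
    simp only [pS, Finset.sum_range_succ]
    field_simp
    ring

lemma pS_mono (β : ℝ) (hβ : 0 < β) (ω : ℕ → ℤ) {j k : ℕ} (hjk : j ≤ k)
    (hnn : ∀ i, j ≤ i → i < k → 0 ≤ ω i) : pS β ω j ≤ pS β ω k := by
  unfold pS
  apply Finset.sum_le_sum_of_subset_of_nonneg (Finset.range_subset_range.2 hjk)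
  intro i hi hi'
  simp only [Finset.mem_range] at hi hi'
  have : 0 ≤ ω i := hnn i (by omega) hi
  have : (0:ℝ) ≤ (ω i : ℝ) := by exact_mod_cast this
  positivity

lemma digits_iff (β : ℝ) (hβ : 1 < β) (ω : ℕ → ℤ) (x : ℝ) (hx : x ∈ Set.Ico (0 : ℝ) 1) :
    ∀ k, ((∀ j < k, eps β x (j + 1) = ω j) ↔
      ∀ j ≤ k, 0 ≤ β ^ j * (x - pS β ω j) ∧ β ^ j * (x - pS β ω j) < 1) := by
  have hβ0 : (0 : ℝ) < β := lt_trans one_pos hβ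
  intro k
  induction k with
  | zero =>
    constructor
    · intro _ j hj
      interval_cases j
      simpa [pS] using ⟨hx.1, hx.2⟩
    · intro _ j hj
      omega
  | succ k ih =>
    constructor
    · intro h j hj
      rcases Nat.lt_or_ge j (k + 1) with hj' | hj'
      · exact (ih.1 fun i hi => h i (by omega)) j (by omega)
      · have hj2 : j = k + 1 := by omega
        subst hj2
        have := iter_eq β hβ0 ω x (k + 1) h
        have hm := iter_mem β x hx (k + 1)
        rw [this] at hm
        exact ⟨hm.1, hm.2⟩
    · intro h j hj
      rcases Nat.lt_or_ge j k with hj' | hj'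
      · exact (ih.2 fun i hi => h i (by omega)) j (by omega)
      · have hj2 : j = k := by omega
        subst hj2
        have hprev : ∀ i < j, eps β x (i + 1) = ω i :=
          ih.2 fun i hi => h i (by omega)
        have hit := iter_eq β hβ0 ω x j hprev
        rw [eps_eq, hit]
        have hcond := h (j + 1) le_rfl
        have hS : pS β ω (j + 1) = pS β ω j + (ω j : ℝ) / β ^ (j + 1) := by
          simp [pS, Finset.sum_range_succ]
        have hbp : (0:ℝ) < β ^ (j + 1) := by positivity
        have key : β * (β ^ j * (x - pS β ω j)) = β ^ (j + 1) * (x - pS β ω (j + 1)) + ω j := by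
          rw [hS]
          field_simp
          ring
        rw [key]
        rw [Int.floor_eq_iff]
        constructor
        · linarith [hcond.1]
        · linarith [hcond.2]

lemma eps_nonneg (β x : ℝ) (hβ : 0 < β) (hx : x ∈ Set.Ico (0 : ℝ) 1) (k : ℕ) :
    0 ≤ eps β x (k + 1) := by
  rw [eps_eq]
  apply Int.floor_nonneg.2
  have := (iter_mem β x hx k).1
  positivity

set_option maxHeartbeats 1000000 in
theorem stmt13 (β : ℝ) (hβ : 1 < β) (n : ℕ) (hn : 1 ≤ n) (ω : ℕ → ℤ) (c' : ℤ)
    (hadm : isAdmissible β n (fun k => if k = n - 1 then c' else ω k)) (hc' : 0 < c') :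
    ∀ c : ℤ, 0 ≤ c → c < c' →
      isFull β n (fun k => if k = n - 1 then c else ω k) := by
  intro c hc0 hcc'
  obtain ⟨x0, hx0, hdig⟩ := hadm
  set ω' : ℕ → ℤ := fun k => if k = n - 1 then c' else ω k with hω'def
  set ωc : ℕ → ℤ := fun k => if k = n - 1 then c else ω k with hωcdef
  have hβ0 : (0 : ℝ) < β := lt_trans one_pos hβ
  have hx0cond := (digits_iff β hβ ω' x0 hx0 n).1 hdig
  have hω'nn : ∀ j, j < n → 0 ≤ ω' j := by
    intro j hj
    rw [← hdig j hj]
    exact eps_nonneg β x0 hβ0 hx0 j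
  have hωcnn : ∀ j, j < n → 0 ≤ ωc j := by
    intro j hj
    by_cases h : j = n - 1
    · simp [hωcdef, h, hc0]
    · have := hω'nn j hj
      simp only [hω'def, if_neg h] at this
      simp [hωcdef, if_neg h, this]
  have hpSeq : ∀ j, j ≤ n - 1 → pS β ωc j = pS β ω' j := by
    intro j hj
    unfold pS
    refine Finset.sum_congr rfl fun i hi => ?_
    simp only [Finset.mem_range] at hi
    have hi' : i ≠ n - 1 := by omega
    simp [hωcdef, hω'def, if_neg hi']
  have hnsucc : n = (n - 1) + 1 := by omega
  have hSn : pS β ωc n = pS β ωc (n - 1) + (c : ℝ) / β ^ n := by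
    conv_lhs => rw [hnsucc]
    simp only [pS, Finset.sum_range_succ]
    have h1 : ωc (n - 1) = c := by simp [hωcdef]
    rw [h1, ← hnsucc]
  have hSn' : pS β ω' n = pS β ω' (n - 1) + (c' : ℝ) / β ^ n := by
    conv_lhs => rw [hnsucc]
    simp only [pS, Finset.sum_range_succ]
    have h1 : ω' (n - 1) = c' := by simp [hω'def]
    rw [h1, ← hnsucc]
  have hbn : (0 : ℝ) < β ^ n := by positivity
  have hinv : β ^ n * (β ^ n)⁻¹ = 1 := mul_inv_cancel₀ (ne_of_gt hbn)
  have ha_le : ∀ j, j ≤ n → pS β ωc j ≤ pS β ωc n :=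
    fun j hj => pS_mono β hβ0 ωc hj fun i _ hi => hωcnn i hi
  have ha0 : 0 ≤ pS β ωc n := by
    have := ha_le 0 (by omega)
    simpa [pS] using this
  have hcc1 : (c : ℝ) + 1 ≤ (c' : ℝ) := by exact_mod_cast hcc'
  have hkey : pS β ωc n + (β ^ n)⁻¹ ≤ pS β ω' n := by
    rw [hSn, hSn', hpSeq (n - 1) le_rfl]
    have : (c : ℝ) / β ^ n + (β ^ n)⁻¹ ≤ (c' : ℝ) / β ^ n := by
      rw [div_add' _ _ _ (ne_of_gt hbn), div_le_div_iff₀ hbn hbn]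
      nlinarith
    linarith
  have hx0ge : pS β ω' n ≤ x0 := by
    have := (hx0cond n le_rfl).1
    nlinarith
  have hx0lt : ∀ j, j ≤ n → x0 < pS β ω' j + (β ^ j)⁻¹ := by
    intro j hj
    have hbj : (0 : ℝ) < β ^ j := by positivity
    have hinvj : β ^ j * (β ^ j)⁻¹ = 1 := mul_inv_cancel₀ (ne_of_gt hbj)
    have := (hx0cond j hj).2
    nlinarith
  have hcyl : _root_.cylinder β n ωc = Set.Ico (pS β ωc n) (pS β ωc n + (β ^ n)⁻¹) := by
    ext x
    simp only [_root_.cylinder, Set.mem_setOf_eq, Set.mem_Ico]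
    constructor
    · rintro ⟨hx, hd⟩
      have hj := ((digits_iff β hβ ωc x hx n).1 hd) n le_rfl
      constructor
      · nlinarith [hj.1]
      · nlinarith [hj.2]
    · rintro ⟨h1, h2⟩
      have hxlt1 : x < 1 :=
        lt_of_lt_of_le (lt_of_lt_of_le h2 (le_trans hkey hx0ge)) (le_of_lt hx0.2)
      have hxmem : x ∈ Set.Ico (0 : ℝ) 1 := ⟨le_trans ha0 h1, hxlt1⟩
      refine ⟨hxmem, (digits_iff β hβ ωc x hxmem n).2 ?_⟩
      intro j hj
      have hbj : (0 : ℝ) < β ^ j := by positivity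
      have hinvj : β ^ j * (β ^ j)⁻¹ = 1 := mul_inv_cancel₀ (ne_of_gt hbj)
      constructor
      · have hle : pS β ωc j ≤ x := le_trans (ha_le j hj) h1
        nlinarith
      · rcases eq_or_lt_of_le hj with hj' | hj'
        · subst hj'
          nlinarith
        · have hjn : j ≤ n - 1 := by omega
          have hxs : x < pS β ωc j + (β ^ j)⁻¹ := by
            rw [hpSeq j hjn]
            calc x < pS β ωc n + (β ^ n)⁻¹ := h2
              _ ≤ pS β ω' n := hkey
              _ ≤ x0 := hx0ge
              _ < pS β ω' j + (β ^ j)⁻¹ := hx0lt j hj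
          nlinarith
  rw [isFull, hcyl, Real.volume_Ico]
  congr 1
  rw [zpow_neg, zpow_natCast]
  ring
end
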